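/- arXiv:1402.1220 — 2 statements merged into one kernel-verified Lean document; each statement's English description precedes it below -/
import Mathlib

section
/- Let b ∈ ℝ³ and fix α ∈ {1,2,3}. Then for every r ≥ 1, ∫_{B(r)\B(1)} x^α (cos(log|x|)/|x|⁵) (b·x) dv₀(x) = (4π b^α/3) sin(log r), where B(r) is the Euclidean ball of radius r centered at the origin and dv₀ is Lebesgue measure on ℝ³. In particular, this integral does not converge as r → ∞ when b^α ≠ 0. -/
open MeasureTheory Metric Filter Real
open scoped Topology

noncomputable section

/-- `ℝ³` with the Euclidean inner product and norm. -/
abbrev E3 : Type := EuclideanSpace ℝ (Fin 3)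

/-- The partial derivative `∂_i f (x)` of a function `f : ℝ³ → ℝ` in the `i`-th
coordinate direction. -/
def pd (i : Fin 3) (f : E3 → ℝ) (x : E3) : ℝ := fderiv ℝ f x (EuclideanSpace.single i 1)

/-- `ODecay k K φ` means `φ = O_k(r^{-K})`: all partial derivatives of order `i ≤ k`
are bounded by `C |x| ^ (-K - i)` for all sufficiently large `|x|`. -/
def ODecay (k K : ℕ) (φ : E3 → ℝ) : Prop :=
  ∃ C R : ℝ, ∀ x : E3, R ≤ ‖x‖ → ∀ i ≤ k, ‖iteratedFDeriv ℝ i φ x‖ ≤ C / ‖x‖ ^ (K + i)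

/-- The conformally flat Schwarzschild background metric
`ḡ_ij = (1 + m/(2r))⁴ δ_ij` of mass `m` (as a matrix-valued function on `ℝ³`). -/
def schwMetric (m : ℝ) (x : E3) : Matrix (Fin 3) (Fin 3) ℝ :=
  ((1 + m / (2 * ‖x‖)) ^ 4) • (1 : Matrix (Fin 3) (Fin 3) ℝ)

/-- A smooth metric `g` on `ℝ³` is asymptotically Schwarzschild (AS) of mass `m` if it is
smooth, positive definite, and `g_ij = (1 + m/(2r))⁴ δ_ij + p_ij` near infinity
with `p_ij = O₄(r^{-2})`. -/
def IsAS (m : ℝ) (g : E3 → Matrix (Fin 3) (Fin 3) ℝ) : Prop :=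
  (∀ i j, ContDiff ℝ (⊤ : ℕ∞) fun x => g x i j) ∧ (∀ x, (g x).PosDef) ∧
  ∃ p : E3 → Matrix (Fin 3) (Fin 3) ℝ, (∀ i j, ODecay 4 2 fun x => p x i j) ∧
    ∃ R : ℝ, ∀ x : E3, R ≤ ‖x‖ → g x = schwMetric m x + p x

/-- The Christoffel symbols `Γ^k_ij = ½ g^{kl}(∂_i g_{jl} + ∂_j g_{il} - ∂_l g_{ij})`. -/
def Chr (g : E3 → Matrix (Fin 3) (Fin 3) ℝ) (k i j : Fin 3) (x : E3) : ℝ :=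
  (1 / 2) * ∑ l, (g x)⁻¹ k l *
    (pd i (fun y => g y j l) x + pd j (fun y => g y i l) x - pd l (fun y => g y i j) x)

/-- The Ricci curvature
`Ric_ij = ∑_k (∂_k Γ^k_ij - ∂_j Γ^k_ik) + ∑_{k,l} (Γ^k_{kl}Γ^l_{ij} - Γ^k_{jl}Γ^l_{ik})`. -/
def RicT (g : E3 → Matrix (Fin 3) (Fin 3) ℝ) (i j : Fin 3) (x : E3) : ℝ :=
  (∑ k, (pd k (fun y => Chr g k i j y) x - pd j (fun y => Chr g k i k y) x)) +
  ∑ k, ∑ l, (Chr g k k l x * Chr g l i j x - Chr g k j l x * Chr g l i k x)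

/-- The scalar curvature `R_g = ∑_{i,j} g^{ij} Ric_ij`. -/
def scalCurv (g : E3 → Matrix (Fin 3) (Fin 3) ℝ) (x : E3) : ℝ :=
  ∑ i, ∑ j, (g x)⁻¹ i j * RicT g i j x

/-- The integral of `F` over the Euclidean sphere `{|x| = r}` with respect to the
Euclidean area element (the 2-dimensional Hausdorff measure). -/
def sphereIntegral (F : E3 → ℝ) (r : ℝ) : ℝ := ∫ x in sphere (0 : E3) r, F x ∂ μH[2]

/-- The integrand `x^α ∑_{i,j}(∂_i g_{ij} - ∂_j g_{ii}) x^j - ∑_i (h_{iα} x^i - h_{ii} x^α)`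
in the Corvino–Schoen center of mass, where `h = g - δ`. -/
def csIntegrand (g : E3 → Matrix (Fin 3) (Fin 3) ℝ) (α : Fin 3) (x : E3) : ℝ :=
  x α * ∑ i, ∑ j, (pd i (fun y => g y i j) x - pd j (fun y => g y i i) x) * x j
  - ∑ i, ((g x i α - if i = α then 1 else 0) * x i - (g x i i - 1) * x α)

/-- The Corvino–Schoen center of mass integral `c_CS^α(r)`. -/
def cCS (m : ℝ) (g : E3 → Matrix (Fin 3) (Fin 3) ℝ) (α : Fin 3) (r : ℝ) : ℝ :=
  (1 / (16 * π * m)) * sphereIntegral (fun x => csIntegrand g α x / r) r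

/-- The Euclidean Laplacian `Δu = ∑_i ∂_i ∂_i u`. -/
def lap (u : E3 → ℝ) (x : E3) : ℝ := ∑ i, pd i (fun y => pd i u y) x

/-- The Newtonian potential `v(x) = -(1/(4π)) ∫ f(y)/|x-y| dy`. -/
def nwt (f : E3 → ℝ) (x : E3) : ℝ := -(1 / (4 * π)) * ∫ y : E3, f y / ‖x - y‖

/-- The conformally flat metric `g_ij = u⁴ δ_ij`. -/
def gconf (u : E3 → ℝ) (x : E3) : Matrix (Fin 3) (Fin 3) ℝ :=
  (u x ^ 4) • (1 : Matrix (Fin 3) (Fin 3) ℝ)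

/-- The conformally flat metric `g_ij = (1 + m/(2|x|) + φ(|x|)(b·x)/|x|³)⁴ δ_ij`. -/
def gPhi (m : ℝ) (b : E3) (φ : ℝ → ℝ) (x : E3) : Matrix (Fin 3) (Fin 3) ℝ :=
  ((1 + m / (2 * ‖x‖) + φ ‖x‖ * (inner ℝ b x : ℝ) / ‖x‖ ^ 3) ^ 4) •
    (1 : Matrix (Fin 3) (Fin 3) ℝ)

/-- A metric defined near infinity is asymptotically Schwarzschild of mass `m` outside a
sufficiently large ball. -/
def IsASNearInfinity (m : ℝ) (g : E3 → Matrix (Fin 3) (Fin 3) ℝ) : Prop :=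
  ∃ R : ℝ, 0 < R ∧ (∀ i j, ContDiffOn ℝ (⊤ : ℕ∞) (fun x => g x i j) {x : E3 | R < ‖x‖}) ∧
    (∀ x : E3, R < ‖x‖ → (g x).PosDef) ∧
    ∃ p : E3 → Matrix (Fin 3) (Fin 3) ℝ, (∀ i j, ODecay 4 2 fun x => p x i j) ∧
      ∀ x : E3, R < ‖x‖ → g x = schwMetric m x + p x

section Stmt15Aux

private def negLin (i : Fin 3) : E3 →ₗ[ℝ] E3 where
  toFun x := WithLp.toLp 2 (fun j => if j = i then -x j else x j)
  map_add' x y := by ext j; by_cases h : j = i <;> simp [h] <;> ring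
  map_smul' c x := by ext j; by_cases h : j = i <;> simp [h]

private lemma negLin_invol (i : Fin 3) : Function.Involutive (negLin i) := by
  intro x; ext j; by_cases h : j = i <;> simp [negLin, h]

private def negIso (i : Fin 3) : E3 ≃ₗᵢ[ℝ] E3 :=
  ⟨LinearEquiv.ofInvolutive (negLin i) (negLin_invol i), by
    intro x
    simp only [LinearEquiv.coe_ofInvolutive]
    rw [EuclideanSpace.norm_eq, EuclideanSpace.norm_eq]
    congr 1
    refine Finset.sum_congr rfl fun j _ => ?_
    by_cases h : j = i <;> simp [negLin, h]⟩

private lemma negIso_apply (i : Fin 3) (x : E3) (j : Fin 3) :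
    negIso i x j = if j = i then -x j else x j := rfl

private lemma mem_ann (r : ℝ) (x : E3) :
    x ∈ closedBall (0 : E3) r \ closedBall (0 : E3) 1 ↔ ‖x‖ ∈ Set.Ioc 1 r := by
  simp only [Set.mem_diff, mem_closedBall, dist_zero_right, Set.mem_Ioc, not_le]
  tauto

private lemma coord_continuous (i : Fin 3) : Continuous (fun x : E3 => x i) :=
  (EuclideanSpace.proj i : E3 →L[ℝ] ℝ).continuous

private lemma integr (r : ℝ) (i j : Fin 3) :
    IntegrableOn (fun x : E3 => x i * x j * (Real.cos (Real.log ‖x‖) / ‖x‖ ^ 5))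
      (closedBall (0 : E3) r \ closedBall (0 : E3) 1) := by
  have hK : IsCompact (closedBall (0 : E3) r ∩ {x : E3 | 1 ≤ ‖x‖}) :=
    (isCompact_closedBall _ _).inter_right (isClosed_le continuous_const continuous_norm)
  have hcont : ContinuousOn (fun x : E3 => x i * x j * (Real.cos (Real.log ‖x‖) / ‖x‖ ^ 5))
      (closedBall (0 : E3) r ∩ {x : E3 | 1 ≤ ‖x‖}) := by
    apply ContinuousOn.mul
    · exact ((coord_continuous i).mul (coord_continuous j)).continuousOn
    · apply ContinuousOn.div
      · apply Real.continuous_cos.comp_continuousOn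
        intro x hx
        have hx0 : ‖x‖ ≠ 0 := by
          have h1 : (1:ℝ) ≤ ‖x‖ := hx.2
          intro h; rw [h] at h1; norm_num at h1
        exact ((Real.continuousAt_log hx0).comp continuous_norm.continuousAt).continuousWithinAt
      · exact (continuous_norm.pow 5).continuousOn
      · intro x hx
        have h1 : (1:ℝ) ≤ ‖x‖ := hx.2
        positivity
  exact (hcont.integrableOn_compact hK).mono_set
    (fun x hx => ⟨hx.1, le_of_lt ((mem_ann r x).mp hx).1⟩)

private lemma off_diag (r : ℝ) (α i : Fin 3) (h : i ≠ α) :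
    (∫ x in closedBall (0 : E3) r \ closedBall (0 : E3) 1,
      x α * x i * (Real.cos (Real.log ‖x‖) / ‖x‖ ^ 5)) = 0 := by
  set A := closedBall (0 : E3) r \ closedBall (0 : E3) 1 with hA
  set e := negIso i
  have hmp : MeasurePreserving e := e.measurePreserving
  have hemb : MeasurableEmbedding e := e.toHomeomorph.measurableEmbedding
  have hpre : e ⁻¹' A = A := by
    ext x
    simp only [Set.mem_preimage, hA, mem_ann, e.norm_map]
  have key := hmp.setIntegral_preimage_emb hemb
    (fun x => x α * x i * (Real.cos (Real.log ‖x‖) / ‖x‖ ^ 5)) A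
  rw [hpre] at key
  have hneg : ∀ x : E3, (e x) α * (e x) i * (Real.cos (Real.log ‖e x‖) / ‖e x‖ ^ 5)
      = -(x α * x i * (Real.cos (Real.log ‖x‖) / ‖x‖ ^ 5)) := by
    intro x
    rw [e.norm_map]
    have h1 : (e x) α = x α := by rw [negIso_apply, if_neg (Ne.symm h)]
    have h2 : (e x) i = -x i := by rw [negIso_apply, if_pos rfl]
    rw [h1, h2]; ring
  simp only [hneg, integral_neg] at key
  linarith

private lemma swap_diag (r : ℝ) (α β : Fin 3) :
    (∫ x in closedBall (0 : E3) r \ closedBall (0 : E3) 1,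
      x α * x α * (Real.cos (Real.log ‖x‖) / ‖x‖ ^ 5)) =
    (∫ x in closedBall (0 : E3) r \ closedBall (0 : E3) 1,
      x β * x β * (Real.cos (Real.log ‖x‖) / ‖x‖ ^ 5)) := by
  set A := closedBall (0 : E3) r \ closedBall (0 : E3) 1 with hA
  set e := LinearIsometryEquiv.piLpCongrLeft 2 ℝ ℝ (Equiv.swap α β) with he
  have hmp : MeasurePreserving e := e.measurePreserving
  have hemb : MeasurableEmbedding e := e.toHomeomorph.measurableEmbedding
  have hpre : e ⁻¹' A = A := by
    ext x
    simp only [Set.mem_preimage, hA, mem_ann, e.norm_map]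
  have key := hmp.setIntegral_preimage_emb hemb
    (fun x => x β * x β * (Real.cos (Real.log ‖x‖) / ‖x‖ ^ 5)) A
  rw [hpre] at key
  have happ : ∀ x : E3, (e x) β = x α := by
    intro x
    rw [he]
    simp only [LinearIsometryEquiv.piLpCongrLeft_apply, Equiv.piCongrLeft'_apply,
      Equiv.symm_swap]
    rw [Equiv.swap_apply_right]
  simp only [happ, e.norm_map] at key
  exact key

private lemma vol_ball_E3 : (volume (ball (0 : E3) 1)).toReal = π * (4 / 3) := by
  rw [EuclideanSpace.volume_ball]
  have h32 : Real.Gamma ((Fintype.card (Fin 3) : ℝ) / 2 + 1) = 3 / 4 * Real.sqrt π := by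
    rw [Fintype.card_fin]
    have e1 : ((3 : ℕ) : ℝ) / 2 + 1 = 3 / 2 + 1 := by norm_num
    rw [e1, Real.Gamma_add_one (by norm_num)]
    have e2 : (3 : ℝ) / 2 = 1 / 2 + 1 := by norm_num
    rw [e2, Real.Gamma_add_one (by norm_num), Real.Gamma_one_half_eq]
    ring
  rw [h32]
  have hsq : Real.sqrt π * Real.sqrt π = π := Real.mul_self_sqrt Real.pi_nonneg
  have hs : Real.sqrt π ^ Fintype.card (Fin 3) = π * Real.sqrt π := by
    rw [Fintype.card_fin]
    calc Real.sqrt π ^ 3 = Real.sqrt π * Real.sqrt π * Real.sqrt π := by ring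
    _ = π * Real.sqrt π := by rw [hsq]
  rw [hs]
  have hpos : 0 < Real.sqrt π := Real.sqrt_pos.mpr Real.pi_pos
  have hdiv : π * Real.sqrt π / (3 / 4 * Real.sqrt π) = π * (4 / 3) := by
    field_simp
  rw [hdiv]
  simp [ENNReal.toReal_ofReal (by positivity : (0:ℝ) ≤ π * (4/3))]

private lemma intervalInt (r : ℝ) (hr : 1 ≤ r) :
    ∫ y in Set.Ioc (1 : ℝ) r, Real.cos (Real.log y) / y = Real.sin (Real.log r) := by
  rw [← intervalIntegral.integral_of_le hr]
  have h : ∀ t ∈ Set.uIcc (1 : ℝ) r, HasDerivAt (fun y => Real.sin (Real.log y))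
      (Real.cos (Real.log t) / t) t := by
    intro t ht
    rw [Set.uIcc_of_le hr] at ht
    have ht0 : t ≠ 0 := by nlinarith [ht.1]
    have := (Real.hasDerivAt_sin (Real.log t)).comp t (Real.hasDerivAt_log ht0)
    rw [div_eq_mul_inv]; exact this
  have hint : IntervalIntegrable (fun t => Real.cos (Real.log t) / t) volume 1 r := by
    apply ContinuousOn.intervalIntegrable
    intro t ht
    rw [Set.uIcc_of_le hr] at ht
    have ht0 : t ≠ 0 := by nlinarith [ht.1]
    have hlog : ContinuousWithinAt (fun y : ℝ => Real.log y) (Set.Icc 1 r) t :=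
      (Real.continuousAt_log ht0).continuousWithinAt
    rw [Set.uIcc_of_le hr]
    exact ((Real.continuous_cos.continuousWithinAt.comp hlog (Set.mapsTo_univ _ _)).div
      continuousWithinAt_id ht0)
  rw [intervalIntegral.integral_eq_sub_of_hasDerivAt h hint]
  simp

private lemma radial (r : ℝ) (hr : 1 ≤ r) :
    (∫ x in closedBall (0 : E3) r \ closedBall (0 : E3) 1,
      ‖x‖ ^ 2 * (Real.cos (Real.log ‖x‖) / ‖x‖ ^ 5)) = 4 * π * Real.sin (Real.log r) := by
  set f : ℝ → ℝ := Set.indicator (Set.Ioc 1 r) (fun t => t ^ 2 * (Real.cos (Real.log t) / t ^ 5))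
    with hf
  have hmeas : MeasurableSet (closedBall (0 : E3) r \ closedBall (0 : E3) 1) :=
    measurableSet_closedBall.diff measurableSet_closedBall
  rw [← integral_indicator hmeas]
  have h1 : (Set.indicator (closedBall (0 : E3) r \ closedBall (0 : E3) 1)
      (fun x : E3 => ‖x‖ ^ 2 * (Real.cos (Real.log ‖x‖) / ‖x‖ ^ 5))) = fun x => f ‖x‖ := by
    funext x
    by_cases hx : x ∈ closedBall (0 : E3) r \ closedBall (0 : E3) 1
    · rw [Set.indicator_of_mem hx, hf, Set.indicator_of_mem ((mem_ann r x).mp hx)]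
    · rw [Set.indicator_of_notMem hx, hf,
        Set.indicator_of_notMem (fun h => hx ((mem_ann r x).mpr h))]
  rw [h1, integral_fun_norm_addHaar volume f]
  simp only [finrank_euclideanSpace_fin, vol_ball_E3, smul_eq_mul, nsmul_eq_mul]
  have h2 : ∀ y : ℝ, y ^ (3 - 1) * f y
      = Set.indicator (Set.Ioc 1 r) (fun t => Real.cos (Real.log t) / t) y := by
    intro y
    by_cases hy : y ∈ Set.Ioc (1 : ℝ) r
    · have hy0 : y ≠ 0 := by have := hy.1; intro h; rw [h] at this; norm_num at this
      rw [hf]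
      rw [Set.indicator_of_mem hy, Set.indicator_of_mem hy]
      field_simp
    · rw [hf, Set.indicator_of_notMem hy, Set.indicator_of_notMem hy, mul_zero]
  simp only [h2]
  rw [setIntegral_indicator measurableSet_Ioc]
  have h3 : Set.Ioi (0:ℝ) ∩ Set.Ioc 1 r = Set.Ioc 1 r :=
    Set.inter_eq_self_of_subset_right (fun y hy => lt_trans one_pos hy.1)
  rw [h3, intervalInt r hr]
  rw [measureReal_def, vol_ball_E3]
  ring

end Stmt15Aux

/-- For every `b ∈ ℝ³`, `α ∈ {1,2,3}` and `r ≥ 1`,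
`∫_{B(r)\B(1)} x^α (cos(log|x|)/|x|⁵)(b·x) dv₀ = (4π b^α/3) sin(log r)`;
in particular the integral does not converge as `r → ∞` when `b^α ≠ 0`. -/
theorem stmt15 (b : E3) (α : Fin 3) :
    (∀ r : ℝ, 1 ≤ r →
      (∫ x in closedBall (0 : E3) r \ closedBall (0 : E3) 1,
          x α * (Real.cos (Real.log ‖x‖) / ‖x‖ ^ 5) * (inner ℝ b x : ℝ))
        = (4 * π * b α / 3) * Real.sin (Real.log r)) ∧
    (b α ≠ 0 → ¬ ∃ L : ℝ, Tendsto (fun r =>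
        ∫ x in closedBall (0 : E3) r \ closedBall (0 : E3) 1,
          x α * (Real.cos (Real.log ‖x‖) / ‖x‖ ^ 5) * (inner ℝ b x : ℝ)) atTop (𝓝 L)) := by
  have main : ∀ r : ℝ, 1 ≤ r →
      (∫ x in closedBall (0 : E3) r \ closedBall (0 : E3) 1,
          x α * (Real.cos (Real.log ‖x‖) / ‖x‖ ^ 5) * (inner ℝ b x : ℝ))
        = (4 * π * b α / 3) * Real.sin (Real.log r) := by
    intro r hr
    set A := closedBall (0 : E3) r \ closedBall (0 : E3) 1 with hA
    have hmeas : MeasurableSet A := measurableSet_closedBall.diff measurableSet_closedBall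
    have hsum : ∀ x : E3, x α * (Real.cos (Real.log ‖x‖) / ‖x‖ ^ 5) * (inner ℝ b x : ℝ)
        = ∑ i, b i * (x α * x i * (Real.cos (Real.log ‖x‖) / ‖x‖ ^ 5)) := by
      intro x
      rw [PiLp.inner_apply]
      simp only [RCLike.inner_apply, conj_trivial]
      rw [Finset.mul_sum]
      exact Finset.sum_congr rfl fun i _ => by ring
    rw [setIntegral_congr_fun hmeas (fun x _ => hsum x),
      integral_finset_sum _ (fun i _ => ((integr r α i).const_mul (b i)))]
    simp only [integral_const_mul]
    rw [Finset.sum_eq_single α (fun i _ hi => by rw [← hA, off_diag r α i hi, mul_zero])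
      (fun h => absurd (Finset.mem_univ α) h)]
    have hdiag : (∫ x in A, x α * x α * (Real.cos (Real.log ‖x‖) / ‖x‖ ^ 5))
        = 4 * π * Real.sin (Real.log r) / 3 := by
      have hsum2 : ∑ β : Fin 3, (∫ x in A, x β * x β * (Real.cos (Real.log ‖x‖) / ‖x‖ ^ 5))
          = 3 * ∫ x in A, x α * x α * (Real.cos (Real.log ‖x‖) / ‖x‖ ^ 5) := by
        rw [Finset.sum_congr rfl (fun β _ => (swap_diag r β α).trans rfl)]
        simp [Finset.sum_const, hA]
      have hpt : ∀ x ∈ A, (∑ β : Fin 3, x β * x β * (Real.cos (Real.log ‖x‖) / ‖x‖ ^ 5))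
          = ‖x‖ ^ 2 * (Real.cos (Real.log ‖x‖) / ‖x‖ ^ 5) := by
        intro x _
        have hx2 : ‖x‖ ^ 2 = ∑ β : Fin 3, x β * x β := by
          rw [EuclideanSpace.norm_eq, Real.sq_sqrt (by positivity)]
          exact Finset.sum_congr rfl fun β _ => by
            rw [Real.norm_eq_abs, sq_abs, pow_two]
        rw [hx2, Finset.sum_mul]
      have h4 : (3:ℝ) * (∫ x in A, x α * x α * (Real.cos (Real.log ‖x‖) / ‖x‖ ^ 5))
          = 4 * π * Real.sin (Real.log r) := by
        rw [← hsum2, ← integral_finset_sum _ (fun β _ => integr r β β),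
          setIntegral_congr_fun hmeas hpt, hA, radial r hr]
      linarith
    rw [hdiag]; ring
  refine ⟨main, ?_⟩
  rintro hb ⟨L, hL⟩
  have hlim : ∀ u : ℕ → ℝ, (∀ n, 1 ≤ u n) → Tendsto u atTop atTop →
      Tendsto (fun n => (4 * π * b α / 3) * Real.sin (Real.log (u n))) atTop (𝓝 L) := by
    intro u h1 h2
    have h3 := hL.comp h2
    have heq : ((fun r => ∫ x in closedBall (0 : E3) r \ closedBall (0 : E3) 1,
          x α * (Real.cos (Real.log ‖x‖) / ‖x‖ ^ 5) * (inner ℝ b x : ℝ)) ∘ u)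
        = fun n => (4 * π * b α / 3) * Real.sin (Real.log (u n)) :=
      funext fun n => main (u n) (h1 n)
    rwa [heq] at h3
  have hu : Tendsto (fun n : ℕ => Real.exp (π / 2 + n * (2 * π))) atTop atTop :=
    Real.tendsto_exp_atTop.comp (tendsto_atTop_add_const_left _ _
      (tendsto_natCast_atTop_atTop.atTop_mul_const (by positivity)))
  have hv : Tendsto (fun n : ℕ => Real.exp (-(π / 2) + (n : ℝ) * (2 * π))) atTop atTop :=
    Real.tendsto_exp_atTop.comp (tendsto_atTop_add_const_left _ _
      (tendsto_natCast_atTop_atTop.atTop_mul_const (by positivity)))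
  have hu1 : ∀ n : ℕ, 1 ≤ Real.exp (π / 2 + n * (2 * π)) := by
    intro n
    rw [← Real.exp_zero]
    exact Real.exp_le_exp.mpr (by positivity)
  have hv1 : ∀ n : ℕ, 1 ≤ Real.exp (-(π / 2) + ((n + 1 : ℕ) : ℝ) * (2 * π)) := by
    intro n
    rw [← Real.exp_zero]
    apply Real.exp_le_exp.mpr
    have : (0:ℝ) ≤ (n:ℝ) := Nat.cast_nonneg n
    push_cast
    nlinarith [Real.pi_pos]
  have hLc : L = 4 * π * b α / 3 := by
    have h5 := hlim _ hu1 hu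
    have h6 : (fun n : ℕ => (4 * π * b α / 3) * Real.sin (Real.log (Real.exp (π / 2 + n * (2 * π)))))
        = fun _ : ℕ => 4 * π * b α / 3 := by
      funext n
      rw [Real.log_exp, Real.sin_add_nat_mul_two_pi, Real.sin_pi_div_two, mul_one]
    rw [h6] at h5
    exact tendsto_nhds_unique h5 tendsto_const_nhds
  have hLc' : L = -(4 * π * b α / 3) := by
    have hv' : Tendsto (fun n : ℕ => Real.exp (-(π / 2) + ((n + 1 : ℕ) : ℝ) * (2 * π)))
        atTop atTop := hv.comp (tendsto_add_atTop_nat 1)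
    have h5 := hlim _ hv1 hv'
    have h6 : (fun n : ℕ => (4 * π * b α / 3) *
          Real.sin (Real.log (Real.exp (-(π / 2) + ((n + 1 : ℕ) : ℝ) * (2 * π)))))
        = fun _ : ℕ => -(4 * π * b α / 3) := by
      funext n
      rw [Real.log_exp, Real.sin_add_nat_mul_two_pi, Real.sin_neg, Real.sin_pi_div_two]
      ring
    rw [h6] at h5
    exact tendsto_nhds_unique h5 tendsto_const_nhds
  have hz : b α = 0 := by
    have := Real.pi_pos
    nlinarith [hLc, hLc']
  exact hb hz
end
end

section
/- There exists a smooth function K ≥ 0 on ℝ³ such that: (i) |∂^{(i)}K(x)| ≤ C|x|^{−4−i} for 0 ≤ i ≤ 3 and all sufficiently large |x|; (ii) there is a constant C > 0 with |∫_{B(r)} x^α K(x) dv₀| ≤ C for α = 1, 2, 3 and all r > 0; and (iii) for some α ∈ {1, 2, 3}, the limit lim_{r→∞} ∫_{B(r)} x^α K(x) dv₀ does not exist. (For instance K(x) = φ(x)(b·x) + Aη(x), where φ is a smooth radial function equal to cos(log|x|)/|x|⁵ for |x| ≥ 1, η is a smooth positive radial function equal to |x|^{−4} for |x| ≥ 1,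 b ≠ 0, and A > 0 is large enough that K > 0.) -/
open MeasureTheory Metric Filter Real
open scoped Topology

noncomputable section

namespace S16

def ψC (s : ℝ) : ℝ := Real.smoothTransition (s - 2)
def ψH (s : ℝ) : ℝ := Real.smoothTransition (2*s - 1)
def ψ0 (s : ℝ) : ℝ := Real.smoothTransition (4*s - 1)
def Cc (s : ℝ) : ℝ := ψC s * (Real.cos (Real.log s / 2) * s ^ (-(5:ℝ)/2))
def Hh (s : ℝ) : ℝ := (1 + ψH s * (s^2 - 1))⁻¹
def Kf (x : E3) : ℝ := x 0 * Cc (‖x‖^2) + Hh (‖x‖^2)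

lemma ψC_zero {s : ℝ} (h : s ≤ 2) : ψC s = 0 :=
  Real.smoothTransition.zero_of_nonpos (by linarith)
lemma ψC_one {s : ℝ} (h : 3 ≤ s) : ψC s = 1 :=
  Real.smoothTransition.one_of_one_le (by linarith)
lemma ψH_one {s : ℝ} (h : 1 ≤ s) : ψH s = 1 :=
  Real.smoothTransition.one_of_one_le (by linarith)
lemma ψ0_one {s : ℝ} (h : 1/2 ≤ s) : ψ0 s = 1 :=
  Real.smoothTransition.one_of_one_le (by linarith)
lemma Hh_denom_pos (s : ℝ) : 0 < 1 + ψH s * (s^2 - 1) := by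
  have h0 : 0 ≤ ψH s := Real.smoothTransition.nonneg _
  have h1 : ψH s ≤ 1 := Real.smoothTransition.le_one _
  rcases le_or_gt s (1/2) with hs | hs
  · have : ψH s = 0 := Real.smoothTransition.zero_of_nonpos (by linarith)
    simp [this]
  · rcases le_or_gt 1 (s^2) with h2 | h2
    · nlinarith
    · nlinarith [mul_le_of_le_one_left (by linarith : (0:ℝ) ≤ 1 - s^2) h1]
lemma Hh_pos (s : ℝ) : 0 < Hh s := inv_pos.2 (Hh_denom_pos s)

lemma coord_abs_le (x : E3) (i : Fin 3) : |x i| ≤ ‖x‖ := by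
  rw [EuclideanSpace.norm_eq x]
  have h1 : |x i| = Real.sqrt (‖x i‖^2) := by rw [Real.sqrt_sq_eq_abs]; simp
  rw [h1]
  exact Real.sqrt_le_sqrt
    (Finset.single_le_sum (f := fun j => ‖x j‖^2) (fun j _ => sq_nonneg _) (Finset.mem_univ i))

lemma rpow_sq_conv (r : ℝ) (hr : 0 < r) : (r^2 : ℝ) ^ (-(5:ℝ)/2) = (r^5)⁻¹ := by
  rw [← Real.rpow_natCast r 2, ← Real.rpow_mul hr.le]
  norm_num

lemma log_sq_div_two (r : ℝ) (hr : 0 < r) : Real.log (r^2) / 2 = Real.log r := by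
  rw [Real.log_pow]; push_cast; ring

lemma Hh_sq (r : ℝ) (hr : 1 ≤ r) : Hh (r^2) = (r^4)⁻¹ := by
  have h1 : (1:ℝ) ≤ r^2 := one_le_pow₀ hr
  rw [Hh, ψH_one h1]
  norm_num
  ring_nf

lemma Cc_sq (r : ℝ) (hr : 2 ≤ r) : Cc (r^2) = Real.cos (Real.log r) * (r^5)⁻¹ := by
  have hr0 : 0 < r := by linarith
  have h3 : (3:ℝ) ≤ r^2 := by nlinarith
  rw [Cc, ψC_one h3, one_mul, rpow_sq_conv r hr0, log_sq_div_two r hr0]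

lemma Kf_eq {x : E3} (hx : 2 ≤ ‖x‖) :
    Kf x = x 0 * (Real.cos (Real.log ‖x‖) * (‖x‖^5)⁻¹) + (‖x‖^4)⁻¹ := by
  rw [Kf, Cc_sq _ hx, Hh_sq _ (by linarith)]

lemma Cc_abs_le (s : ℝ) (hs : 0 < s) : |Cc s| ≤ s ^ (-(5:ℝ)/2) := by
  have h2 : (0:ℝ) ≤ s ^ (-(5:ℝ)/2) := Real.rpow_nonneg hs.le _
  have h3 : 0 ≤ ψC s := Real.smoothTransition.nonneg _
  rw [Cc, abs_mul, abs_mul, abs_of_nonneg h3, abs_of_nonneg h2]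
  calc ψC s * (|Real.cos (Real.log s / 2)| * s ^ (-(5:ℝ)/2))
      ≤ 1 * (1 * s ^ (-(5:ℝ)/2)) := by
        apply mul_le_mul (Real.smoothTransition.le_one _) ?_ (by positivity) one_pos.le
        exact mul_le_mul (Real.abs_cos_le_one _) le_rfl h2 one_pos.le
    _ = s ^ (-(5:ℝ)/2) := by ring

lemma Kf_nonneg (x : E3) : 0 ≤ Kf x := by
  set s := ‖x‖^2 with hs
  rcases le_or_gt s 2 with h | h
  · have : Cc s = 0 := by rw [Cc, ψC_zero h, zero_mul]
    rw [Kf, ← hs, this, mul_zero, zero_add]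
    exact (Hh_pos s).le
  · have hxn : 0 < ‖x‖ := by nlinarith [norm_nonneg x]
    have hx1 : 1 ≤ ‖x‖ := by nlinarith
    have hb : |x 0 * Cc s| ≤ (‖x‖^4)⁻¹ := by
      rw [abs_mul]
      calc |x 0| * |Cc s| ≤ ‖x‖ * s ^ (-(5:ℝ)/2) :=
            mul_le_mul (coord_abs_le x 0) (Cc_abs_le s (by positivity)) (abs_nonneg _)
              (norm_nonneg _)
        _ = ‖x‖ * (‖x‖^5)⁻¹ := by rw [hs, rpow_sq_conv _ hxn]
        _ = (‖x‖^4)⁻¹ := by field_simp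
    have hH : Hh s = (‖x‖^4)⁻¹ := Hh_sq _ hx1
    rw [Kf, ← hs, hH]
    have := neg_abs_le (x 0 * Cc s)
    linarith

lemma contDiff_cut {τ G : ℝ → ℝ} {a : ℝ} (ha : 0 < a) (hτ : ContDiff ℝ (⊤:ℕ∞) τ)
    (hτ0 : ∀ s < a, τ s = 0) (hG : ∀ s : ℝ, 0 < s → ContDiffAt ℝ (⊤:ℕ∞) G s) :
    ContDiff ℝ (⊤:ℕ∞) (fun s => τ s * G s) := by
  rw [contDiff_iff_contDiffAt]
  intro s
  rcases lt_or_ge 0 s with hs | hs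
  · exact (hτ.contDiffAt).mul (hG s hs)
  · have hmem : Set.Iio a ∈ 𝓝 s := Iio_mem_nhds (lt_of_le_of_lt hs ha)
    have : (fun s => τ s * G s) =ᶠ[𝓝 s] fun _ => 0 := by
      filter_upwards [hmem] with t ht
      simp [hτ0 t ht]
    exact (contDiffAt_const (c := 0)).congr_of_eventuallyEq this

lemma contDiffAt_osc (c : ℝ → ℝ) (hc : ContDiff ℝ (⊤:ℕ∞) c) (p : ℝ) (s : ℝ) (hs : 0 < s) :
    ContDiffAt ℝ (⊤:ℕ∞) (fun s => c (Real.log s / 2) * s ^ p) s := by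
  have h1 : ContDiffAt ℝ (⊤:ℕ∞) (fun s : ℝ => c (Real.log s / 2)) s :=
    hc.contDiffAt.comp s ((Real.contDiffAt_log.2 hs.ne').div_const 2)
  exact h1.mul (Real.contDiffAt_rpow_const_of_ne hs.ne')

lemma contDiff_Hh : ContDiff ℝ (⊤:ℕ∞) Hh := by
  have hden : ContDiff ℝ (⊤:ℕ∞) (fun s : ℝ => 1 + ψH s * (s^2 - 1)) := by
    exact contDiff_const.add ((Real.smoothTransition.contDiff.comp
      ((contDiff_const.mul contDiff_id).sub contDiff_const)).mul
      ((contDiff_id.pow 2).sub contDiff_const))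
  exact hden.inv (fun s => (Hh_denom_pos s).ne')

lemma contDiff_Cc : ContDiff ℝ (⊤:ℕ∞) Cc := by
  refine contDiff_cut (a := 2) two_pos
    (Real.smoothTransition.contDiff.comp (contDiff_id.sub contDiff_const))
    (fun s hs => ψC_zero hs.le) (fun s hs => ?_)
  exact contDiffAt_osc Real.cos Real.contDiff_cos _ s hs

lemma contDiff_coord (i : Fin 3) : ContDiff ℝ (⊤:ℕ∞) (fun x : E3 => x i) :=
  (EuclideanSpace.proj i : E3 →L[ℝ] ℝ).contDiff

lemma contDiff_Kf : ContDiff ℝ (⊤:ℕ∞) Kf := by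
  exact ((contDiff_coord 0).mul (contDiff_Cc.comp (contDiff_norm_sq ℝ))).add
    (contDiff_Hh.comp (contDiff_norm_sq ℝ))


def c1 (s : ℝ) : ℝ := ψ0 s * (Real.cos (Real.log s / 2) * s ^ (-(5:ℝ)/2))
def c2 (s : ℝ) : ℝ := ψ0 s * (Real.sin (Real.log s / 2) * s ^ (-(5:ℝ)/2))
def h0 (s : ℝ) : ℝ := ψ0 s * (Real.cos 0 * s ^ (-(2:ℝ)))
def F1 (y : E3) : ℝ := y 0 * c1 (‖y‖^2)
def F2 (y : E3) : ℝ := y 0 * c2 (‖y‖^2)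
def F3 (y : E3) : ℝ := h0 (‖y‖^2)
def P (θ : ℝ) : E3 → ℝ := Real.cos θ • F1 + (-Real.sin θ) • F2 + F3

lemma ψ0_contDiff : ContDiff ℝ (⊤:ℕ∞) ψ0 :=
  Real.smoothTransition.contDiff.comp ((contDiff_const.mul contDiff_id).sub contDiff_const)

lemma ψ0_zero {s : ℝ} (h : s < 1/4) : ψ0 s = 0 :=
  Real.smoothTransition.zero_of_nonpos (by linarith)

lemma contDiff_c1 : ContDiff ℝ (⊤:ℕ∞) c1 :=
  contDiff_cut (a := 1/4) (by norm_num) ψ0_contDiff (fun s hs => ψ0_zero hs)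
    (fun s hs => contDiffAt_osc Real.cos Real.contDiff_cos _ s hs)

lemma contDiff_c2 : ContDiff ℝ (⊤:ℕ∞) c2 :=
  contDiff_cut (a := 1/4) (by norm_num) ψ0_contDiff (fun s hs => ψ0_zero hs)
    (fun s hs => contDiffAt_osc Real.sin Real.contDiff_sin _ s hs)

lemma contDiff_h0 : ContDiff ℝ (⊤:ℕ∞) h0 :=
  contDiff_cut (a := 1/4) (by norm_num) ψ0_contDiff (fun s hs => ψ0_zero hs)
    (fun s hs => contDiffAt_osc (fun _ => Real.cos 0) contDiff_const _ s hs)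

lemma contDiff_F1 : ContDiff ℝ (⊤:ℕ∞) F1 :=
  (contDiff_coord 0).mul (contDiff_c1.comp (contDiff_norm_sq ℝ))
lemma contDiff_F2 : ContDiff ℝ (⊤:ℕ∞) F2 :=
  (contDiff_coord 0).mul (contDiff_c2.comp (contDiff_norm_sq ℝ))
lemma contDiff_F3 : ContDiff ℝ (⊤:ℕ∞) F3 :=
  contDiff_h0.comp (contDiff_norm_sq ℝ)
lemma contDiff_P (θ : ℝ) : ContDiff ℝ (⊤:ℕ∞) (P θ) :=
  ((contDiff_const.smul contDiff_F1).add (contDiff_const.smul contDiff_F2)).add contDiff_F3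

lemma rpow_sq_conv2 (r : ℝ) (hr : 0 < r) : (r^2 : ℝ) ^ (-(2:ℝ)) = (r^4)⁻¹ := by
  rw [← Real.rpow_natCast r 2, ← Real.rpow_mul hr.le]
  norm_num

lemma P_eq {θ : ℝ} {y : E3} (hy : 3/4 ≤ ‖y‖) :
    P θ y = y 0 * ((Real.cos θ * Real.cos (Real.log ‖y‖) -
      Real.sin θ * Real.sin (Real.log ‖y‖)) * (‖y‖^5)⁻¹) + (‖y‖^4)⁻¹ := by
  have hy0 : 0 < ‖y‖ := by linarith
  have h12 : 1/2 ≤ ‖y‖^2 := by nlinarith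
  have hc1 : c1 (‖y‖^2) = Real.cos (Real.log ‖y‖) * (‖y‖^5)⁻¹ := by
    rw [c1, ψ0_one h12, one_mul, rpow_sq_conv _ hy0, log_sq_div_two _ hy0]
  have hc2 : c2 (‖y‖^2) = Real.sin (Real.log ‖y‖) * (‖y‖^5)⁻¹ := by
    rw [c2, ψ0_one h12, one_mul, rpow_sq_conv _ hy0, log_sq_div_two _ hy0]
  have hh0 : h0 (‖y‖^2) = (‖y‖^4)⁻¹ := by
    rw [h0, ψ0_one h12, one_mul, Real.cos_zero, one_mul, rpow_sq_conv2 _ hy0]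
  simp only [P, Pi.add_apply, Pi.smul_apply, smul_eq_mul, F1, F2, F3, hc1, hc2, hh0]
  ring

lemma key_eq {l : ℝ} (hl : 3 ≤ l) {z : E3} (hz : 3/4 * l ≤ ‖z‖) :
    Kf z = (l^4)⁻¹ * P (Real.log l) (l⁻¹ • z) := by
  have hl0 : 0 < l := by linarith
  have hr2 : 2 ≤ ‖z‖ := by nlinarith
  have hr0 : 0 < ‖z‖ := by linarith
  have hnorm : ‖l⁻¹ • z‖ = l⁻¹ * ‖z‖ := by
    rw [norm_smul, Real.norm_eq_abs, abs_of_pos (inv_pos.2 hl0)]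
  have hy : 3/4 ≤ ‖l⁻¹ • z‖ := by
    rw [hnorm, inv_mul_eq_div, le_div_iff₀ hl0]
    linarith
  rw [P_eq hy, Kf_eq hr2]
  have happ : (l⁻¹ • z) 0 = l⁻¹ * z 0 := rfl
  have hlog : Real.log ‖l⁻¹ • z‖ = Real.log ‖z‖ - Real.log l := by
    rw [hnorm, Real.log_mul (inv_ne_zero hl0.ne') hr0.ne', Real.log_inv]; ring
  have hcos : Real.cos (Real.log l) * Real.cos (Real.log ‖l⁻¹ • z‖) -
      Real.sin (Real.log l) * Real.sin (Real.log ‖l⁻¹ • z‖) = Real.cos (Real.log ‖z‖) := by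
    rw [← Real.cos_add, hlog]; ring_nf
  rw [happ, hcos, hnorm]
  field_simp

lemma cd_nat {f : E3 → ℝ} (h : ContDiff ℝ (⊤:ℕ∞) f) (i : ℕ) : ContDiff ℝ (i:ℕ∞) f :=
  h.of_le (by exact_mod_cast le_top)

lemma iteratedFDeriv_congr_nhds {f g : E3 → ℝ} {x : E3} (h : f =ᶠ[𝓝 x] g) (n : ℕ) :
    iteratedFDeriv ℝ n f x = iteratedFDeriv ℝ n g x := by
  simp only [← iteratedFDerivWithin_univ]
  refine Filter.EventuallyEq.iteratedFDerivWithin_eq ?_ h.self_of_nhds n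
  rwa [nhdsWithin_univ]

lemma exists_M : ∃ M : ℝ, 0 ≤ M ∧ ∀ θ : ℝ, ∀ y : E3, ‖y‖ = 1 →
    ∀ i ≤ 3, ‖iteratedFDeriv ℝ i (P θ) y‖ ≤ M := by
  set G : E3 → ℝ := fun y => ∑ i ∈ Finset.range 4,
    (‖iteratedFDeriv ℝ i F1 y‖ + ‖iteratedFDeriv ℝ i F2 y‖ + ‖iteratedFDeriv ℝ i F3 y‖) with hG
  have hGc : Continuous G := by
    apply continuous_finset_sum
    intro i _
    exact (((cd_nat contDiff_F1 i).continuous_iteratedFDeriv le_rfl).norm.add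
      ((cd_nat contDiff_F2 i).continuous_iteratedFDeriv le_rfl).norm).add
      ((cd_nat contDiff_F3 i).continuous_iteratedFDeriv le_rfl).norm
  obtain ⟨M, hM⟩ := (isCompact_sphere (0:E3) 1).exists_bound_of_continuousOn hGc.continuousOn
  refine ⟨max M 0, le_max_right _ _, fun θ y hy i hi => ?_⟩
  have hyS : y ∈ sphere (0:E3) 1 := by simpa [mem_sphere_iff_norm] using hy
  have hGy : G y ≤ M := le_trans (le_abs_self _) (hM y hyS)
  have hterm : ‖iteratedFDeriv ℝ i F1 y‖ + ‖iteratedFDeriv ℝ i F2 y‖ +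
      ‖iteratedFDeriv ℝ i F3 y‖ ≤ G y := by
    rw [hG]
    exact Finset.single_le_sum (f := fun i => ‖iteratedFDeriv ℝ i F1 y‖ +
      ‖iteratedFDeriv ℝ i F2 y‖ + ‖iteratedFDeriv ℝ i F3 y‖)
      (fun j _ => by positivity) (Finset.mem_range.2 (by omega))
  have hs1 : ContDiff ℝ (i : ℕ∞) (Real.cos θ • F1) := cd_nat (contDiff_const.smul contDiff_F1) i
  have hs2 : ContDiff ℝ (i : ℕ∞) ((-Real.sin θ) • F2) := cd_nat (contDiff_const.smul contDiff_F2) i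
  have h1 : ContDiff ℝ (i : ℕ∞) (Real.cos θ • F1 + (-Real.sin θ) • F2) := hs1.add hs2
  have e1 : iteratedFDeriv ℝ i (P θ) y =
      (Real.cos θ • iteratedFDeriv ℝ i F1 y + (-Real.sin θ) • iteratedFDeriv ℝ i F2 y) +
        iteratedFDeriv ℝ i F3 y := by
    rw [P, iteratedFDeriv_add_apply h1.contDiffAt (cd_nat contDiff_F3 i).contDiffAt,
      iteratedFDeriv_add_apply hs1.contDiffAt hs2.contDiffAt,
      iteratedFDeriv_const_smul_apply (cd_nat contDiff_F1 i).contDiffAt,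
      iteratedFDeriv_const_smul_apply (cd_nat contDiff_F2 i).contDiffAt]
  calc ‖iteratedFDeriv ℝ i (P θ) y‖
      ≤ ‖Real.cos θ • iteratedFDeriv ℝ i F1 y + (-Real.sin θ) • iteratedFDeriv ℝ i F2 y‖ +
        ‖iteratedFDeriv ℝ i F3 y‖ := by rw [e1]; exact norm_add_le _ _
    _ ≤ (‖Real.cos θ • iteratedFDeriv ℝ i F1 y‖ + ‖(-Real.sin θ) • iteratedFDeriv ℝ i F2 y‖) +
        ‖iteratedFDeriv ℝ i F3 y‖ := by gcongr; exact norm_add_le _ _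
    _ ≤ (1 * ‖iteratedFDeriv ℝ i F1 y‖ + 1 * ‖iteratedFDeriv ℝ i F2 y‖) +
        ‖iteratedFDeriv ℝ i F3 y‖ := by
          gcongr
          · rw [norm_smul]
            exact mul_le_mul_of_nonneg_right
              (by rw [Real.norm_eq_abs]; exact Real.abs_cos_le_one θ) (norm_nonneg _)
          · rw [norm_smul]
            exact mul_le_mul_of_nonneg_right
              (by rw [Real.norm_eq_abs, abs_neg]; exact Real.abs_sin_le_one θ) (norm_nonneg _)
    _ ≤ G y := by simpa using hterm
    _ ≤ max M 0 := le_trans hGy (le_max_left _ _)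

lemma deriv_bound : ∃ C R : ℝ, ∀ x : E3, R ≤ ‖x‖ →
    ∀ i ≤ 3, ‖iteratedFDeriv ℝ i Kf x‖ ≤ C / ‖x‖ ^ (4 + i) := by
  obtain ⟨M, hM0, hM⟩ := exists_M
  refine ⟨M, 3, fun x hx i hi => ?_⟩
  set l := ‖x‖ with hldef
  have hl : 3 ≤ l := hx
  have hl0 : 0 < l := by linarith
  set θ := Real.log l with hθ
  set L : E3 →L[ℝ] E3 := l⁻¹ • ContinuousLinearMap.id ℝ E3 with hL
  have hLapp : ∀ z : E3, L z = l⁻¹ • z := fun z => rfl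
  have hKQ : Kf =ᶠ[𝓝 x] fun z => (l^4)⁻¹ • ((P θ) ∘ L) z := by
    have hopen : IsOpen {z : E3 | 3/4 * l < ‖z‖} := isOpen_lt continuous_const continuous_norm
    have hmem : x ∈ {z : E3 | 3/4 * l < ‖z‖} := by
      simp only [Set.mem_setOf_eq, ← hldef]; nlinarith
    filter_upwards [hopen.mem_nhds hmem] with z hz
    simp only [Function.comp_apply, hLapp, smul_eq_mul]
    exact key_eq hl (le_of_lt hz)
  have hPi : ContDiff ℝ (i : ℕ∞) (P θ) := cd_nat (contDiff_P θ) i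
  have hPLi : ContDiff ℝ (i : ℕ∞) ((P θ) ∘ L) := hPi.comp L.contDiff
  rw [iteratedFDeriv_congr_nhds hKQ i, iteratedFDeriv_const_smul_apply' hPLi.contDiffAt, norm_smul,
    L.iteratedFDeriv_comp_right hPi x le_rfl]
  have hLx : ‖L x‖ = 1 := by
    rw [hLapp, norm_smul, Real.norm_eq_abs, abs_of_pos (inv_pos.2 hl0), ← hldef,
      inv_mul_cancel₀ hl0.ne']
  have hLnorm : ‖L‖ ≤ l⁻¹ := by
    calc ‖L‖ = ‖l⁻¹ • ContinuousLinearMap.id ℝ E3‖ := by rw [hL]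
      _ ≤ ‖l⁻¹‖ * ‖ContinuousLinearMap.id ℝ E3‖ := ContinuousLinearMap.opNorm_smul_le _ _
      _ ≤ ‖l⁻¹‖ * 1 := by gcongr; exact ContinuousLinearMap.norm_id_le
      _ = l⁻¹ := by rw [mul_one, Real.norm_eq_abs, abs_of_pos (inv_pos.2 hl0)]
  have hcomp : ‖(iteratedFDeriv ℝ i (P θ) (L x)).compContinuousLinearMap fun _ => L‖ ≤
      M * (l⁻¹)^i := by
    calc ‖(iteratedFDeriv ℝ i (P θ) (L x)).compContinuousLinearMap fun _ => L‖
        ≤ ‖iteratedFDeriv ℝ i (P θ) (L x)‖ * ∏ _j : Fin i, ‖L‖ :=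
          ContinuousMultilinearMap.norm_compContinuousLinearMap_le _ _
      _ ≤ M * (l⁻¹)^i := by
          rw [Finset.prod_const, Finset.card_univ, Fintype.card_fin]
          exact mul_le_mul (hM θ (L x) hLx i hi) (pow_le_pow_left₀ (norm_nonneg _) hLnorm i)
            (pow_nonneg (norm_nonneg _) i) hM0
  calc ‖(l^4)⁻¹‖ * ‖(iteratedFDeriv ℝ i (P θ) (L x)).compContinuousLinearMap fun _ => L‖
      ≤ (l^4)⁻¹ * (M * (l⁻¹)^i) := by
        rw [Real.norm_eq_abs, abs_of_pos (by positivity)]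
        gcongr
    _ = M / l ^ (4+i) := by
        rw [pow_add, div_eq_mul_inv, mul_inv, inv_pow]
        ring

lemma integral_ball_comp (e : E3 ≃ₗᵢ[ℝ] E3) (f : E3 → ℝ) (r : ℝ) :
    ∫ x in ball (0:E3) r, f (e x) = ∫ x in ball (0:E3) r, f x := by
  have himg : e '' ball (0:E3) r = ball (0:E3) r := by
    have h := e.toIsometryEquiv.image_ball 0 r
    simpa [map_zero] using h
  conv_rhs => rw [← himg]
  rw [e.measurePreserving.setIntegral_image_emb e.toHomeomorph.measurableEmbedding f (ball 0 r)]

lemma integral_ball_zero_of_odd (e : E3 ≃ₗᵢ[ℝ] E3) {f : E3 → ℝ}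
    (h : ∀ x, f (e x) = - f x) (r : ℝ) : ∫ x in ball (0:E3) r, f x = 0 := by
  have h1 := integral_ball_comp e f r
  simp only [h] at h1
  rw [integral_neg] at h1
  linarith

def negE (j : Fin 3) : E3 ≃ₗᵢ[ℝ] E3 :=
  LinearIsometryEquiv.piLpCongrRight 2
    (fun i => if i = j then LinearIsometryEquiv.neg ℝ else LinearIsometryEquiv.refl ℝ ℝ)

lemma negE_apply (j : Fin 3) (x : E3) (i : Fin 3) :
    negE j x i = if i = j then -x i else x i := by
  simp only [negE, LinearIsometryEquiv.piLpCongrRight_apply]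
  by_cases h : i = j
  · subst h; simp
  · simp [h]

def swapE (j : Fin 3) : E3 ≃ₗᵢ[ℝ] E3 :=
  LinearIsometryEquiv.piLpCongrLeft 2 ℝ ℝ (Equiv.swap 0 j)

lemma swapE_apply (j : Fin 3) (x : E3) (i : Fin 3) :
    swapE j x i = x (Equiv.swap 0 j i) := by
  simp [swapE, LinearIsometryEquiv.piLpCongrLeft_apply, Equiv.piCongrLeft'_apply]


lemma radial_ball (Φ : ℝ → ℝ) (r : ℝ) (hr : 0 < r) :
    ∫ x in ball (0:E3) r, Φ ‖x‖ =
      3 * (volume (ball (0:E3) 1)).toReal * ∫ t in (0:ℝ)..r, t^2 * Φ t := by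
  have h1 : ∫ x in ball (0:E3) r, Φ ‖x‖ = ∫ x : E3, (Set.indicator (Set.Iio r) Φ) ‖x‖ := by
    rw [← integral_indicator measurableSet_ball]
    congr 1
    ext x
    by_cases h : ‖x‖ < r
    · simp [Set.indicator, mem_ball_zero_iff, h]
    · simp [Set.indicator, mem_ball_zero_iff, h]
  rw [h1, integral_fun_norm_addHaar volume (Set.indicator (Set.Iio r) Φ)]
  have hdim : Module.finrank ℝ E3 = 3 := finrank_euclideanSpace_fin
  rw [hdim]
  have h2 : ∫ y in Set.Ioi (0:ℝ), y ^ (3-1) • (Set.indicator (Set.Iio r) Φ) y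
      = ∫ t in (0:ℝ)..r, t^2 * Φ t := by
    have e1 : ∀ y : ℝ, y ^ (3-1) • (Set.indicator (Set.Iio r) Φ) y
        = Set.indicator (Set.Iio r) (fun t => t^2 * Φ t) y := by
      intro y
      by_cases h : y < r
      · simp [Set.indicator, h, smul_eq_mul]
      · simp [Set.indicator, h]
    simp only [e1]
    rw [integral_indicator measurableSet_Iio, Measure.restrict_restrict measurableSet_Iio,
      Set.Iio_inter_Ioi, intervalIntegral.integral_of_le hr.le,
      MeasureTheory.integral_Ioc_eq_integral_Ioo]
  rw [h2]
  simp only [nsmul_eq_mul, smul_eq_mul]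
  rw [measureReal_def]
  ring


def V : ℝ := (volume (ball (0:E3) 1)).toReal
def W (r : ℝ) : ℝ := ∫ t in (0:ℝ)..r, t^4 * Cc (t^2)

lemma V_pos : 0 < V :=
  ENNReal.toReal_pos (measure_ball_pos volume 0 one_pos).ne' measure_ball_lt_top.ne

lemma continuous_Cc : Continuous Cc := contDiff_Cc.continuous
lemma continuous_Hh : Continuous Hh := contDiff_Hh.continuous
lemma continuous_Kf : Continuous Kf := contDiff_Kf.continuous
lemma continuous_nsq : Continuous (fun x : E3 => ‖x‖^2) := continuous_norm.pow 2

lemma integrableOn_ball' {f : E3 → ℝ} (hf : Continuous f) (r : ℝ) :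
    IntegrableOn f (ball (0:E3) r) volume :=
  (hf.continuousOn.integrableOn_compact (isCompact_closedBall (0:E3) r)).mono_set
    ball_subset_closedBall

lemma I_ne_zero {α : Fin 3} (hα : α ≠ 0) (r : ℝ) :
    ∫ x in ball (0:E3) r, x α * Kf x = 0 := by
  apply integral_ball_zero_of_odd (negE α)
  intro x
  have h1 : (negE α x) α = - x α := by rw [negE_apply]; simp
  have h2 : (negE α x) 0 = x 0 := by rw [negE_apply]; simp [Ne.symm hα]
  have h3 : ‖negE α x‖ = ‖x‖ := (negE α).norm_map x
  simp only [Kf, h1, h2, h3]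
  ring

lemma I_zero_eq (r : ℝ) :
    ∫ x in ball (0:E3) r, x 0 * Kf x = ∫ x in ball (0:E3) r, (x 0)^2 * Cc (‖x‖^2) := by
  have e1 : ∀ x : E3, x 0 * Kf x = (x 0)^2 * Cc (‖x‖^2) + x 0 * Hh (‖x‖^2) := by
    intro x; rw [Kf]; ring
  simp only [e1]
  have hf1 : IntegrableOn (fun x : E3 => (x 0)^2 * Cc (‖x‖^2)) (ball (0:E3) r) volume :=
    integrableOn_ball' (by exact (((contDiff_coord 0).continuous.pow 2).mul
      (continuous_Cc.comp continuous_nsq))) r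
  have hf2 : IntegrableOn (fun x : E3 => x 0 * Hh (‖x‖^2)) (ball (0:E3) r) volume :=
    integrableOn_ball' (by exact ((contDiff_coord 0).continuous.mul
      (continuous_Hh.comp continuous_nsq))) r
  rw [integral_add hf1 hf2]
  have h2 : ∫ x in ball (0:E3) r, x 0 * Hh (‖x‖^2) = 0 := by
    apply integral_ball_zero_of_odd (negE 0)
    intro x
    have h1 : (negE 0 x) 0 = - x 0 := by rw [negE_apply]; simp
    have h3 : ‖negE 0 x‖ = ‖x‖ := (negE 0).norm_map x
    rw [h1, h3]
    ring
  rw [h2, add_zero]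

lemma sq_swap (j : Fin 3) (r : ℝ) :
    ∫ x in ball (0:E3) r, (x j)^2 * Cc (‖x‖^2) =
      ∫ x in ball (0:E3) r, (x 0)^2 * Cc (‖x‖^2) := by
  have h := integral_ball_comp (swapE j) (fun x => (x 0)^2 * Cc (‖x‖^2)) r
  rw [← h]
  apply setIntegral_congr_fun measurableSet_ball
  intro x _
  simp only [swapE_apply, Equiv.swap_apply_left, (swapE j).norm_map]

lemma norm_sq_coords (x : E3) : (x 0)^2 + (x 1)^2 + (x 2)^2 = ‖x‖^2 := by
  rw [EuclideanSpace.norm_eq, Real.sq_sqrt (by positivity)]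
  simp [Fin.sum_univ_three, Real.norm_eq_abs, sq_abs]

lemma I0_formula {r : ℝ} (hr : 0 < r) :
    ∫ x in ball (0:E3) r, x 0 * Kf x = V * W r := by
  rw [I_zero_eq r]
  set A := ∫ x in ball (0:E3) r, (x 0)^2 * Cc (‖x‖^2) with hA
  have hint : ∀ j : Fin 3, IntegrableOn (fun x : E3 => (x j)^2 * Cc (‖x‖^2))
      (ball (0:E3) r) volume := fun j =>
    integrableOn_ball' (by exact (((contDiff_coord j).continuous.pow 2).mul
      (continuous_Cc.comp continuous_nsq))) r
  have hg12 : IntegrableOn (fun x : E3 => (x 1)^2 * Cc (‖x‖^2) + (x 2)^2 * Cc (‖x‖^2))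
      (ball (0:E3) r) volume := (hint 1).add (hint 2)
  have h3A : 3 * A = ∫ x in ball (0:E3) r, ‖x‖^2 * Cc (‖x‖^2) := by
    have e1 : ∀ x : E3, ‖x‖^2 * Cc (‖x‖^2) =
        (x 0)^2 * Cc (‖x‖^2) + ((x 1)^2 * Cc (‖x‖^2) + (x 2)^2 * Cc (‖x‖^2)) := by
      intro x
      rw [← norm_sq_coords x]
      ring
    simp only [e1]
    rw [integral_add (hint 0) hg12, integral_add (hint 1) (hint 2),
      sq_swap 1, sq_swap 2, ← hA]
    ring
  have hrad : ∫ x in ball (0:E3) r, ‖x‖^2 * Cc (‖x‖^2) = 3 * V * W r := by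
    have h := radial_ball (fun t => t^2 * Cc (t^2)) r hr
    rw [h, V, W]
    congr 1
    apply intervalIntegral.integral_congr
    intro t _
    ring
  have : 3 * A = 3 * (V * W r) := by rw [h3A, hrad]; ring
  linarith

lemma integrand_cont : Continuous fun t : ℝ => t^4 * Cc (t^2) :=
  (continuous_pow 4).mul (continuous_Cc.comp (continuous_pow 2))

lemma W_eq {r : ℝ} (hr : 2 ≤ r) :
    W r = W 2 + (Real.sin (Real.log r) - Real.sin (Real.log 2)) := by
  have hadd : W 2 + ∫ t in (2:ℝ)..r, t^4 * Cc (t^2) = W r := by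
    rw [W, W]
    exact intervalIntegral.integral_add_adjacent_intervals
      (integrand_cont.intervalIntegrable _ _) (integrand_cont.intervalIntegrable _ _)
  have hcong : ∫ t in (2:ℝ)..r, t^4 * Cc (t^2) =
      ∫ t in (2:ℝ)..r, Real.cos (Real.log t) * t⁻¹ := by
    apply intervalIntegral.integral_congr
    intro t ht
    rw [Set.uIcc_of_le hr] at ht
    have ht2 : 2 ≤ t := ht.1
    have ht0 : (0:ℝ) < t := by linarith
    show t^4 * Cc (t^2) = Real.cos (Real.log t) * t⁻¹
    rw [Cc_sq t ht2]
    field_simp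
  have hftc : ∫ t in (2:ℝ)..r, Real.cos (Real.log t) * t⁻¹ =
      Real.sin (Real.log r) - Real.sin (Real.log 2) := by
    apply intervalIntegral.integral_eq_sub_of_hasDerivAt
    · intro t ht
      rw [Set.uIcc_of_le hr] at ht
      have ht0 : t ≠ 0 := by have := ht.1; intro h; rw [h] at this; linarith
      exact (Real.hasDerivAt_log ht0).sin
    · apply ContinuousOn.intervalIntegrable
      intro t ht
      rw [Set.uIcc_of_le hr] at ht
      have ht0 : t ≠ 0 := by have := ht.1; intro h; rw [h] at this; linarith
      exact ((Real.continuous_cos.continuousAt.comp (Real.continuousAt_log ht0)).mul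
        (continuousAt_inv₀ ht0)).continuousWithinAt
  linarith [hadd, hcong ▸ hftc]

lemma W_bound : ∃ B : ℝ, 0 ≤ B ∧ ∀ r : ℝ, 0 < r → |W r| ≤ B := by
  obtain ⟨D, hD⟩ := (isCompact_Icc (a := (0:ℝ)) (b := 2)).exists_bound_of_continuousOn
    integrand_cont.continuousOn
  have hD0 : 0 ≤ D := le_trans (norm_nonneg _) (hD 0 (by norm_num))
  have hsmall : ∀ r : ℝ, 0 < r → r ≤ 2 → |W r| ≤ 2 * D := by
    intro r hr hr2
    have := intervalIntegral.norm_integral_le_of_norm_le_const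
      (C := D) (f := fun t => t^4 * Cc (t^2)) (a := 0) (b := r) ?_
    · rw [Real.norm_eq_abs] at this
      calc |W r| ≤ D * |r - 0| := this
        _ ≤ 2 * D := by rw [sub_zero, abs_of_pos hr]; nlinarith
    · intro t ht
      rw [Set.uIoc_of_le hr.le] at ht
      exact hD t ⟨ht.1.le, le_trans ht.2 hr2⟩
  refine ⟨2 * D + 2, by linarith, fun r hr => ?_⟩
  rcases le_or_gt r 2 with h | h
  · linarith [hsmall r hr h]
  · rw [W_eq h.le]
    have h1 := hsmall 2 two_pos le_rfl
    have h2 := Real.neg_one_le_sin (Real.log r)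
    have h3 := Real.sin_le_one (Real.log r)
    have h4 := Real.neg_one_le_sin (Real.log 2)
    have h5 := Real.sin_le_one (Real.log 2)
    rw [abs_le] at h1 ⊢
    constructor <;> linarith [h1.1, h1.2]

lemma two_le_exp_arg (c : ℝ) (hc : 1 ≤ c) (n : ℕ) : 2 ≤ Real.exp (c + n * (2 * π)) := by
  have hπ : 3 < π := Real.pi_gt_three
  have h1 : 1 + (c + n * (2 * π)) ≤ Real.exp (c + n * (2 * π)) := by
    have := Real.add_one_le_exp (c + n * (2 * π))
    linarith
  have hn : (0:ℝ) ≤ n * (2 * π) := by positivity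
  linarith

lemma tendsto_exp_seq (c : ℝ) :
    Tendsto (fun n : ℕ => Real.exp (c + n * (2 * π))) atTop atTop := by
  apply Real.tendsto_exp_atTop.comp
  apply tendsto_atTop_add_const_left
  have h2π : 0 < 2 * π := by positivity
  exact Tendsto.atTop_mul_const h2π tendsto_natCast_atTop_atTop

lemma sin_log_exp_seq (c : ℝ) (n : ℕ) :
    Real.sin (Real.log (Real.exp (c + n * (2 * π)))) = Real.sin c := by
  rw [Real.log_exp]
  exact Real.sin_add_nat_mul_two_pi c n

lemma no_limit : ¬ ∃ L : ℝ, Tendsto (fun r => V * W r) atTop (𝓝 L) := by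
  rintro ⟨L, hL⟩
  set c₁ := V * (W 2 + (1 - Real.sin (Real.log 2))) with hc₁
  set c₂ := V * (W 2 + (-1 - Real.sin (Real.log 2))) with hc₂
  have hval : ∀ c : ℝ, 1 ≤ c → Real.sin c = Real.sin c →
      Tendsto (fun n : ℕ => V * W (Real.exp (c + n * (2 * π)))) atTop
        (𝓝 (V * (W 2 + (Real.sin c - Real.sin (Real.log 2))))) := by
    intro c hc _
    have heq : (fun n : ℕ => V * W (Real.exp (c + n * (2 * π)))) =
        fun _ : ℕ => V * (W 2 + (Real.sin c - Real.sin (Real.log 2))) := by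
      funext n
      rw [W_eq (two_le_exp_arg c hc n), sin_log_exp_seq c n]
    rw [heq]
    exact tendsto_const_nhds
  have hlim1 : Tendsto (fun n : ℕ => V * W (Real.exp (π/2 + n * (2 * π)))) atTop (𝓝 L) :=
    hL.comp (tendsto_exp_seq (π/2))
  have hlim2 : Tendsto (fun n : ℕ => V * W (Real.exp ((π/2 + π) + n * (2 * π)))) atTop (𝓝 L) :=
    hL.comp (tendsto_exp_seq (π/2 + π))
  have hπ : 3 < π := Real.pi_gt_three
  have h1 := tendsto_nhds_unique hlim1 (hval (π/2) (by linarith) rfl)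
  have h2 := tendsto_nhds_unique hlim2 (hval (π/2 + π) (by linarith) rfl)
  rw [Real.sin_pi_div_two] at h1
  rw [show Real.sin (π/2 + π) = -1 by rw [Real.sin_add_pi, Real.sin_pi_div_two]] at h2
  have hV := V_pos
  nlinarith [h1, h2]

lemma bound_part : ∃ C : ℝ, 0 < C ∧ ∀ r : ℝ, 0 < r → ∀ α : Fin 3,
    |∫ x in ball (0 : E3) r, x α * Kf x| ≤ C := by
  obtain ⟨B, hB0, hB⟩ := W_bound
  have hVB : 0 ≤ V * B := mul_nonneg V_pos.le hB0
  refine ⟨V * B + 1, by linarith, fun r hr α => ?_⟩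
  by_cases hα : α = 0
  · subst hα
    rw [I0_formula hr, abs_mul, abs_of_pos V_pos]
    nlinarith [hB r hr, V_pos]
  · rw [I_ne_zero hα r]
    simp only [abs_zero]
    linarith

lemma nolimit_part : ∃ α : Fin 3, ¬ ∃ L : ℝ,
    Tendsto (fun r => ∫ x in ball (0 : E3) r, x α * Kf x) atTop (𝓝 L) := by
  refine ⟨0, ?_⟩
  rintro ⟨L, hL⟩
  apply no_limit
  refine ⟨L, hL.congr' ?_⟩
  filter_upwards [eventually_ge_atTop (1:ℝ)] with r hr
  exact I0_formula (by linarith)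

end S16

/-- Example of the paper. There is a smooth `K ≥ 0` on `ℝ³` with
`|∂^{(i)}K(x)| ≤ C|x|^{-4-i}` for `0 ≤ i ≤ 3` and large `|x|`, with
`|∫_{B(r)} x^α K dv₀| ≤ C` for all `r > 0` and `α = 1,2,3`, and such that for some `α` the
limit `lim_{r→∞} ∫_{B(r)} x^α K dv₀` does not exist. -/
theorem stmt16 :
    ∃ K : E3 → ℝ, ContDiff ℝ (⊤ : ℕ∞) K ∧ (∀ x, 0 ≤ K x) ∧
      (∃ C R : ℝ, ∀ x : E3, R ≤ ‖x‖ →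
        ∀ i ≤ 3, ‖iteratedFDeriv ℝ i K x‖ ≤ C / ‖x‖ ^ (4 + i)) ∧
      (∃ C : ℝ, 0 < C ∧ ∀ r : ℝ, 0 < r → ∀ α : Fin 3,
        |∫ x in ball (0 : E3) r, x α * K x| ≤ C) ∧
      (∃ α : Fin 3, ¬ ∃ L : ℝ,
        Tendsto (fun r => ∫ x in ball (0 : E3) r, x α * K x) atTop (𝓝 L)) := by
  exact ⟨S16.Kf, S16.contDiff_Kf, S16.Kf_nonneg, S16.deriv_bound, S16.bound_part,
    S16.nolimit_part⟩
end
end
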